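/- ∑_{k=1}^∞ (−1)^k (216/49)^k / C(3k,k) = −32/81 − (28√3/729)·arctan(√3/5) − (14/81)·log 7. -/

import Mathlib

open Real MeasureTheory intervalIntegral


lemma beta_nat : ∀ (n m : ℕ), (∫ t in (0:ℝ)..1, t^m * (1-t)^n) =
    (m.factorial * n.factorial : ℝ) / ((m+n+1).factorial) := by
  intro n
  induction n with
  | zero =>
    intro m
    simp only [pow_zero, mul_one, integral_pow]
    rw [Nat.add_zero, Nat.factorial_succ]
    push_cast
    rw [eq_div_iff (by positivity)]
    field_simp
    simp
  | succ n ih =>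
    intro m
    have hderiv : ∀ t ∈ Set.uIcc (0:ℝ) 1, HasDerivAt (fun t : ℝ => t^(m+1) * (1-t)^(n+1))
        (((m:ℝ)+1) * (t^m * (1-t)^(n+1)) - ((n:ℝ)+1) * (t^(m+1) * (1-t)^n)) t := by
      intro t _
      have h1 : HasDerivAt (fun t : ℝ => t^(m+1)) (((m:ℝ)+1) * t^m) t := by
        simpa using hasDerivAt_pow (m+1) t
      have h2 : HasDerivAt (fun t : ℝ => (1-t)^(n+1)) (((n:ℝ)+1) * (1-t)^n * (-1)) t := by
        have := (((hasDerivAt_id t).const_sub 1).fun_pow (n+1))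
        simpa using this
      have := h1.fun_mul h2
      refine this.congr_deriv ?_
      ring
    have hint : IntervalIntegrable (fun t : ℝ =>
        ((m:ℝ)+1) * (t^m * (1-t)^(n+1)) - ((n:ℝ)+1) * (t^(m+1) * (1-t)^n)) volume 0 1 := by
      apply Continuous.intervalIntegrable; fun_prop
    have key := integral_eq_sub_of_hasDerivAt hderiv hint
    simp only [one_pow, sub_self, zero_pow (Nat.succ_ne_zero n), mul_zero,
      zero_pow (Nat.succ_ne_zero m), zero_mul, sub_zero] at key
    have i1 : IntervalIntegrable (fun t : ℝ => t^m * (1-t)^(n+1)) volume 0 1 := by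
      apply Continuous.intervalIntegrable; fun_prop
    have i2 : IntervalIntegrable (fun t : ℝ => t^(m+1) * (1-t)^n) volume 0 1 := by
      apply Continuous.intervalIntegrable; fun_prop
    rw [integral_sub ((i1.const_mul _)) ((i2.const_mul _)), intervalIntegral.integral_const_mul,
      intervalIntegral.integral_const_mul, ih (m+1), sub_eq_zero] at key
    have hm1 : ((m:ℝ)+1) ≠ 0 := by positivity
    have heq : (∫ t in (0:ℝ)..1, t^m * (1-t)^(n+1)) =
        (((n:ℝ)+1) * ((m+1).factorial * n.factorial / ((m+1+n+1).factorial))) / ((m:ℝ)+1) := by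
      field_simp at key ⊢
      linarith [key]
    rw [heq]
    have h1 : (m+1+n+1) = (m + (n+1) + 1) := by omega
    rw [h1]
    have h2 : ((m+(n+1)+1).factorial : ℝ) ≠ 0 := by positivity
    rw [Nat.factorial_succ m, Nat.factorial_succ n]
    push_cast
    field_simp


lemma term_core (n : ℕ) (c : ℝ) : c / ((((3*n).choose n : ℕ)) : ℝ) =
    (3*(n:ℝ)+1) * (c * ((n.factorial * (2*n).factorial : ℝ) / (((3*n+1).factorial : ℕ) : ℝ))) := by
  have hch := Nat.choose_mul_factorial_mul_factorial (show n ≤ 3*n by omega)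
  have h2 : 3*n - n = 2*n := by omega
  rw [h2] at hch
  have hchR : (((3*n).choose n : ℝ)) * (n.factorial : ℝ) * ((2*n).factorial : ℝ)
      = ((3*n).factorial : ℝ) := by exact_mod_cast congrArg Nat.cast hch
  have hfs : (((3*n+1).factorial : ℕ) : ℝ) = (3*(n:ℝ)+1) * ((3*n).factorial : ℝ) := by
    rw [Nat.factorial_succ]; push_cast; ring
  have hc0 : (((3*n).choose n : ℝ)) ≠ 0 :=
    Nat.cast_ne_zero.mpr (Nat.choose_pos (show n ≤ 3*n by omega)).ne'
  have hf1 : ((3*n).factorial : ℝ) ≠ 0 := by positivity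
  have hf2 : (3*(n:ℝ)+1) ≠ 0 := by positivity
  rw [hfs, div_eq_iff hc0]
  field_simp
  linear_combination (-c) * hchR

lemma term_eq (k : ℕ) :
    (-(216/49) : ℝ)^(k+1) / ((((3*(k+1)).choose (k+1) : ℕ)) : ℝ) =
    ∫ t in (0:ℝ)..1, (3*((k:ℝ)+1)+1) * ((-(216/49):ℝ) * (t * (1-t)^2))^(k+1) := by
  have hinteg : (∫ t in (0:ℝ)..1, (3*((k:ℝ)+1)+1) * ((-(216/49):ℝ) * (t * (1-t)^2))^(k+1))
      = (3*((k:ℝ)+1)+1) * ((-(216/49):ℝ)^(k+1) * ∫ t in (0:ℝ)..1, t^(k+1) * (1-t)^(2*(k+1))) := by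
    rw [← intervalIntegral.integral_const_mul, ← intervalIntegral.integral_const_mul]
    apply integral_congr
    intro t _
    simp only [mul_pow, pow_mul]
  rw [hinteg, beta_nat (2*(k+1)) (k+1)]
  have h3 : (k+1) + 2*(k+1) + 1 = 3*(k+1)+1 := by omega
  rw [h3]
  have := term_core (k+1) ((-(216/49):ℝ)^(k+1))
  push_cast at this ⊢
  linarith [this]


lemma summable_bound : Summable (fun k : ℕ => (3*((k:ℝ)+1)+1) * (32/49)^(k+1)) := by
  have h1 : Summable (fun k : ℕ => (k:ℝ)^1 * (32/49)^k) :=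
    summable_pow_mul_geometric_of_norm_lt_one 1 (by rw [Real.norm_eq_abs]; rw [abs_of_pos] <;> norm_num)
  have h2 : Summable (fun k : ℕ => ((32:ℝ)/49)^k) := summable_geometric_of_lt_one (by norm_num) (by norm_num)
  have := ((h1.mul_left 3).add (h2.mul_left 4)).mul_left (32/49)
  apply this.congr
  intro k
  push_cast
  ring

lemma u_bound {t : ℝ} (ht0 : 0 ≤ t) (ht1 : t ≤ 1) :
    |(-(216/49):ℝ) * (t * (1-t)^2)| ≤ 32/49 := by
  have hnn : 0 ≤ t * (1-t)^2 := mul_nonneg ht0 (sq_nonneg _)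
  rw [abs_mul, abs_of_nonneg hnn]
  have : |(-(216/49):ℝ)| = 216/49 := by rw [abs_of_nonpos] <;> norm_num
  rw [this]
  nlinarith [sq_nonneg (3*t-1), mul_nonneg (sq_nonneg (3*t-1)) (by linarith : (0:ℝ) ≤ 4 - 3*t)]

lemma pointwise_sum {u : ℝ} (hu : |u| < 1) :
    ∑' k : ℕ, (3*((k:ℝ)+1)+1) * u^(k+1) = 3*(u/(1-u)^2) + u/(1-u) := by
  have hn : ‖u‖ < 1 := by rwa [Real.norm_eq_abs]
  have hs1 : Summable (fun n : ℕ => (n:ℝ) * u^n) := by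
    have := summable_pow_mul_geometric_of_norm_lt_one 1 hn
    apply this.congr; intro n; rw [pow_one]
  have hs2 : Summable (fun n : ℕ => u^n) := summable_geometric_of_norm_lt_one hn
  have hs1' : Summable (fun k : ℕ => ((k:ℝ)+1) * u^(k+1)) := by
    have := (summable_nat_add_iff 1).2 hs1
    apply this.congr; intro n; push_cast; ring
  have hs2' : Summable (fun k : ℕ => u^(k+1)) := by
    have := (summable_nat_add_iff 1).2 hs2
    apply this.congr; intro n; rfl
  have key : ∑' k : ℕ, (3*((k:ℝ)+1)+1) * u^(k+1)
      = 3 * (∑' k : ℕ, ((k:ℝ)+1) * u^(k+1)) + ∑' k : ℕ, u^(k+1) := by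
    rw [← tsum_mul_left, ← Summable.tsum_add (hs1'.mul_left 3) hs2']
    apply tsum_congr; intro k; ring
  have e1 : ∑' k : ℕ, ((k:ℝ)+1) * u^(k+1) = u/(1-u)^2 := by
    have h0 := Summable.tsum_eq_zero_add hs1
    simp only [Nat.cast_zero, zero_mul, pow_zero, zero_add] at h0
    rw [tsum_coe_mul_geometric_of_norm_lt_one hn] at h0
    rw [h0]
    apply tsum_congr; intro k; push_cast; ring
  have e2 : ∑' k : ℕ, u^(k+1) = u/(1-u) := by
    have : ∀ k : ℕ, u^(k+1) = u * u^k := fun k => by ring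
    rw [tsum_congr this, tsum_mul_left, tsum_geometric_of_norm_lt_one hn]
    rw [div_eq_mul_inv]
  rw [key, e1, e2]


noncomputable def gg (t : ℝ) : ℝ :=
  -1 - 98/(216*t^3-432*t^2+216*t+49) + 7203/(216*t^3-432*t^2+216*t+49)^2

lemma ppos {t : ℝ} (ht0 : 0 ≤ t) (ht1 : t ≤ 1) : (0:ℝ) < 216*t^3-432*t^2+216*t+49 := by
  nlinarith [mul_nonneg ht0 (sq_nonneg (1-t))]

lemma sum_to_g {t : ℝ} (ht0 : 0 ≤ t) (ht1 : t ≤ 1) :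
    ∑' k : ℕ, (3*((k:ℝ)+1)+1) * ((-(216/49):ℝ) * (t * (1-t)^2))^(k+1) = gg t := by
  set u := (-(216/49):ℝ) * (t * (1-t)^2) with hu_def
  have hu : |u| < 1 := lt_of_le_of_lt (u_bound ht0 ht1) (by norm_num)
  rw [pointwise_sum hu]
  have hp : 216*t^3-432*t^2+216*t+49 = 49*(1-u) := by rw [hu_def]; ring
  have hpp := ppos ht0 ht1
  have h1u : (1:ℝ) - u ≠ 0 := by rw [hp] at hpp; intro h; rw [h] at hpp; norm_num at hpp
  rw [gg, hp]
  field_simp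
  ring

lemma swap :
    ∑' k : ℕ, ∫ t in (0:ℝ)..1, (3*((k:ℝ)+1)+1) * ((-(216/49):ℝ) * (t * (1-t)^2))^(k+1)
    = ∫ t in (0:ℝ)..1, gg t := by
  have hmeas : MeasurableSet (Set.Ioc (0:ℝ) 1) := measurableSet_Ioc
  have hcont : ∀ k : ℕ, Continuous (fun t : ℝ => (3*((k:ℝ)+1)+1) * ((-(216/49):ℝ) * (t * (1-t)^2))^(k+1)) := by
    intro k; fun_prop
  have hF_int : ∀ k : ℕ, Integrable
      (fun t : ℝ => (3*((k:ℝ)+1)+1) * ((-(216/49):ℝ) * (t * (1-t)^2))^(k+1))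
      (volume.restrict (Set.Ioc (0:ℝ) 1)) := by
    intro k
    exact (hcont k).integrableOn_Ioc
  have hbound : ∀ k : ℕ, ∀ t ∈ Set.Ioc (0:ℝ) 1,
      ‖(3*((k:ℝ)+1)+1) * ((-(216/49):ℝ) * (t * (1-t)^2))^(k+1)‖ ≤ (3*((k:ℝ)+1)+1) * (32/49)^(k+1) := by
    intro k t ht
    rw [norm_mul, norm_pow, Real.norm_eq_abs, Real.norm_eq_abs]
    have h1 : |3*((k:ℝ)+1)+1| = 3*((k:ℝ)+1)+1 := abs_of_pos (by positivity)
    rw [h1]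
    apply mul_le_mul_of_nonneg_left _ (by positivity)
    exact pow_le_pow_left₀ (abs_nonneg _) (u_bound ht.1.le ht.2) (k+1)
  have hF_sum : Summable (fun k : ℕ =>
      ∫ t in Set.Ioc (0:ℝ) 1, ‖(3*((k:ℝ)+1)+1) * ((-(216/49):ℝ) * (t * (1-t)^2))^(k+1)‖) := by
    apply Summable.of_nonneg_of_le (fun k => integral_nonneg (fun t => norm_nonneg _))
      _ summable_bound
    intro k
    calc (∫ t in Set.Ioc (0:ℝ) 1, ‖(3*((k:ℝ)+1)+1) * ((-(216/49):ℝ) * (t * (1-t)^2))^(k+1)‖)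
        ≤ ∫ _ in Set.Ioc (0:ℝ) 1, (3*((k:ℝ)+1)+1) * (32/49)^(k+1) := by
          apply setIntegral_mono_on ((hF_int k).norm) (integrableOn_const (by simp))
            hmeas (hbound k)
      _ = (3*((k:ℝ)+1)+1) * (32/49)^(k+1) := by
          rw [setIntegral_const]
          simp
  have key := integral_tsum_of_summable_integral_norm hF_int hF_sum
  have h01 : (0:ℝ) ≤ 1 := zero_le_one
  calc ∑' k : ℕ, ∫ t in (0:ℝ)..1, (3*((k:ℝ)+1)+1) * ((-(216/49):ℝ) * (t * (1-t)^2))^(k+1)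
      = ∑' k : ℕ, ∫ t in Set.Ioc (0:ℝ) 1, (3*((k:ℝ)+1)+1) * ((-(216/49):ℝ) * (t * (1-t)^2))^(k+1) := by
        apply tsum_congr; intro k; rw [integral_of_le h01]
    _ = ∫ t in Set.Ioc (0:ℝ) 1, ∑' k : ℕ, (3*((k:ℝ)+1)+1) * ((-(216/49):ℝ) * (t * (1-t)^2))^(k+1) := key
    _ = ∫ t in Set.Ioc (0:ℝ) 1, gg t := by
        apply setIntegral_congr_fun hmeas
        intro t ht
        exact sum_to_g ht.1.le ht.2
    _ = ∫ t in (0:ℝ)..1, gg t := (integral_of_le h01).symm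


noncomputable def FF (t : ℝ) : ℝ :=
  -t - (28/243)*Real.log (6*t+1) + (14/243)*Real.log (36*t^2-78*t+49)
  - (28*Real.sqrt 3/2187)*Real.arctan ((12*t-13)*Real.sqrt 3/9)
  + (49/243)*((144*t^2+3*t-98)/(216*t^3-432*t^2+216*t+49))

lemma rpos (t : ℝ) : (0:ℝ) < 36*t^2-78*t+49 := by nlinarith [sq_nonneg (12*t-13)]

lemma arctan_part_deriv (t : ℝ) :
    HasDerivAt (fun t : ℝ => Real.arctan ((12*t-13)*Real.sqrt 3/9))
      ((9*Real.sqrt 3) / (36*t^2-78*t+49)) t := by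
  have hs3 : Real.sqrt 3 ^ 2 = 3 := Real.sq_sqrt (by norm_num)
  have hin : HasDerivAt (fun t : ℝ => (12*t-13)*Real.sqrt 3/9) (12*Real.sqrt 3/9) t := by
    have h1 : HasDerivAt (fun t : ℝ => 12*t-13) 12 t := by
      simpa using ((hasDerivAt_id t).const_mul 12).sub_const 13
    exact (h1.mul_const (Real.sqrt 3)).div_const 9
  have := hin.arctan
  convert this using 1
  have hsq : ((12*t-13)*Real.sqrt 3/9)^2 = (12*t-13)^2/27 := by
    rw [div_pow, mul_pow, hs3]; ring
  rw [hsq]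
  have hr := rpos t
  have h27 : (1:ℝ) + (12*t-13)^2/27 = (4*(36*t^2-78*t+49))/27 := by ring
  rw [h27]
  have hr' : (36*t^2-78*t+49) ≠ 0 := ne_of_gt hr
  field_simp
  ring



lemma FF_deriv {t : ℝ} (ht0 : 0 ≤ t) (ht1 : t ≤ 1) : HasDerivAt FF (gg t) t := by
  have hq : (0:ℝ) < 6*t+1 := by linarith
  have hr := rpos t
  have hp := ppos ht0 ht1
  have d1 : HasDerivAt (fun t : ℝ => -t) (-1) t := (hasDerivAt_id t).neg
  have hlin : HasDerivAt (fun t : ℝ => 6*t+1) 6 t := by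
    simpa using ((hasDerivAt_id t).const_mul 6).add_const 1
  have d2 : HasDerivAt (fun t : ℝ => Real.log (6*t+1)) (6/(6*t+1)) t := hlin.log (ne_of_gt hq)
  have hquad : HasDerivAt (fun t : ℝ => 36*t^2-78*t+49) (72*t-78) t := by
    have h := (((hasDerivAt_pow 2 t).const_mul (36:ℝ)).fun_sub ((hasDerivAt_id t).const_mul 78)).add_const 49
    refine h.congr_deriv ?_
    push_cast; ring
  have d3 : HasDerivAt (fun t : ℝ => Real.log (36*t^2-78*t+49)) ((72*t-78)/(36*t^2-78*t+49)) t :=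
    hquad.log (ne_of_gt hr)
  have d4 := arctan_part_deriv t
  have hnum : HasDerivAt (fun t : ℝ => 144*t^2+3*t-98) (288*t+3) t := by
    have h := (((hasDerivAt_pow 2 t).const_mul (144:ℝ)).fun_add ((hasDerivAt_id t).const_mul 3)).sub_const 98
    refine h.congr_deriv ?_
    push_cast; ring
  have hden : HasDerivAt (fun t : ℝ => 216*t^3-432*t^2+216*t+49) (648*t^2-864*t+216) t := by
    have h := ((((hasDerivAt_pow 3 t).const_mul (216:ℝ)).fun_sub ((hasDerivAt_pow 2 t).const_mul 432)).fun_add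
      ((hasDerivAt_id t).const_mul 216)).add_const 49
    refine h.congr_deriv ?_
    push_cast; ring
  have d5 : HasDerivAt (fun t : ℝ => (144*t^2+3*t-98)/(216*t^3-432*t^2+216*t+49))
      (((288*t+3)*(216*t^3-432*t^2+216*t+49) - (144*t^2+3*t-98)*(648*t^2-864*t+216))
        /(216*t^3-432*t^2+216*t+49)^2) t := hnum.div hden (ne_of_gt hp)
  have combined := ((((d1.fun_sub (d2.const_mul (28/243))).fun_add (d3.const_mul (14/243))).fun_sub
    (d4.const_mul (28*Real.sqrt 3/2187))).fun_add (d5.const_mul (49/243)))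
  have hFFeq : FF = fun t : ℝ =>
      -t - (28/243)*Real.log (6*t+1) + (14/243)*Real.log (36*t^2-78*t+49)
      - (28*Real.sqrt 3/2187)*Real.arctan ((12*t-13)*Real.sqrt 3/9)
      + (49/243)*((144*t^2+3*t-98)/(216*t^3-432*t^2+216*t+49)) := rfl
  rw [hFFeq]
  refine combined.congr_deriv ?_
  have hss : Real.sqrt 3 * Real.sqrt 3 = 3 := Real.mul_self_sqrt (by norm_num)
  have h33 : 28*Real.sqrt 3/2187 * (9*Real.sqrt 3/(36*t^2-78*t+49)) = (28/81)/(36*t^2-78*t+49) := by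
    rw [div_mul_div_comm]
    rw [show (28*Real.sqrt 3*(9*Real.sqrt 3)) = 756 from by linear_combination 252 * hss]
    rw [div_eq_div_iff (by positivity) (by positivity)]
    ring
  rw [h33]
  rw [gg]
  have hqne := ne_of_gt hq
  have hrne := ne_of_gt hr
  have hpne := ne_of_gt hp
  have hrne' : t * (t * 36 - 78) + 49 ≠ 0 := by convert hrne using 1; ring
  have hpne' : t * (t * (t * 216 - 432) + 216) + 49 ≠ 0 := by convert hpne using 1; ring
  field_simp
  ring


lemma arctan3 : Real.arctan (13*Real.sqrt 3/9) - Real.arctan (Real.sqrt 3/9)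
    = 3*Real.arctan (Real.sqrt 3/5) := by
  have hss : Real.sqrt 3 * Real.sqrt 3 = 3 := Real.mul_self_sqrt (by norm_num)
  have hnn : 0 ≤ Real.sqrt 3 := Real.sqrt_nonneg 3
  set s := Real.sqrt 3 with hs
  have hlt2 : s < 2 := by nlinarith
  have h1 : Real.arctan (s/5) + Real.arctan (s/5) = Real.arctan (5*s/11) := by
    rw [Real.arctan_add (by nlinarith : (s/5)*(s/5) < 1)]
    congr 1
    have hd : 1-(s/5)*(s/5) = 22/25 := by linear_combination (-1/25)*hss
    rw [hd, div_eq_iff (by norm_num : (22/25:ℝ) ≠ 0)]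
    ring
  have h2 : Real.arctan (5*s/11) + Real.arctan (s/5) = Real.arctan (9*s/10) := by
    rw [Real.arctan_add (by nlinarith : (5*s/11)*(s/5) < 1)]
    congr 1
    have hd : 1-(5*s/11)*(s/5) = 8/11 := by linear_combination (-1/11)*hss
    rw [hd, div_eq_iff (by norm_num : (8/11:ℝ) ≠ 0)]
    ring
  have h3 : Real.arctan (13*s/9) + Real.arctan (-(s/9)) = Real.arctan (9*s/10) := by
    rw [Real.arctan_add (by nlinarith : (13*s/9)*(-(s/9)) < 1)]
    congr 1
    have hd : 1-(13*s/9)*(-(s/9)) = 40/27 := by linear_combination (13/81)*hss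
    rw [hd, div_eq_iff (by norm_num : (40/27:ℝ) ≠ 0)]
    ring
  rw [Real.arctan_neg] at h3
  have h9 : Real.arctan (s/9) = Real.arctan (Real.sqrt 3/9) := by rw [hs]
  linarith

lemma integ_gg : ∫ t in (0:ℝ)..1, gg t = FF 1 - FF 0 := by
  apply integral_eq_sub_of_hasDerivAt
  · intro t ht
    rw [Set.uIcc_of_le zero_le_one, Set.mem_Icc] at ht
    exact FF_deriv ht.1 ht.2
  · apply ContinuousOn.intervalIntegrable
    rw [Set.uIcc_of_le zero_le_one]
    have hc : ∀ t ∈ Set.Icc (0:ℝ) 1, (216*t^3-432*t^2+216*t+49) ≠ 0 := fun t ht =>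
      ne_of_gt (ppos ht.1 ht.2)
    show ContinuousOn (fun t : ℝ =>
      -1 - 98/(216*t^3-432*t^2+216*t+49) + 7203/(216*t^3-432*t^2+216*t+49)^2) (Set.Icc 0 1)
    apply ContinuousOn.add
    · apply ContinuousOn.sub continuousOn_const
      exact continuousOn_const.div (by fun_prop) hc
    · exact continuousOn_const.div (by fun_prop) (fun t ht => pow_ne_zero 2 (hc t ht))

lemma FF_eval : FF 1 - FF 0 =
    -(32/81) - (28*Real.sqrt 3/729)*Real.arctan (Real.sqrt 3/5) - (14/81)*Real.log 7 := by
  have h49 : Real.log 49 = 2 * Real.log 7 := by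
    rw [show (49:ℝ) = 7^2 by norm_num, Real.log_pow]; push_cast; ring
  have e1 : FF 1 = -1 - (28/243)*Real.log 7 + (14/243)*Real.log 7
      + (28*Real.sqrt 3/2187)*Real.arctan (Real.sqrt 3/9) + 49/243 := by
    show -(1:ℝ) - (28/243)*Real.log (6*1+1) + (14/243)*Real.log (36*1^2-78*1+49)
      - (28*Real.sqrt 3/2187)*Real.arctan ((12*1-13)*Real.sqrt 3/9)
      + (49/243)*((144*1^2+3*1-98)/(216*1^3-432*1^2+216*1+49)) = _
    norm_num
    rw [show (-Real.sqrt 3/9 : ℝ) = -(Real.sqrt 3/9) by ring, Real.arctan_neg]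
    ring
  have e0 : FF 0 = (28/243)*Real.log 7 + (28*Real.sqrt 3/2187)*Real.arctan (13*Real.sqrt 3/9)
      - 98/243 := by
    show -(0:ℝ) - (28/243)*Real.log (6*0+1) + (14/243)*Real.log (36*0^2-78*0+49)
      - (28*Real.sqrt 3/2187)*Real.arctan ((12*0-13)*Real.sqrt 3/9)
      + (49/243)*((144*0^2+3*0-98)/(216*0^3-432*0^2+216*0+49)) = _
    norm_num [h49]
    rw [show (-(13*Real.sqrt 3)/9 : ℝ) = -(13*Real.sqrt 3/9) by ring, Real.arctan_neg]
    ring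
  rw [e1, e0]
  have h3 := arctan3
  linear_combination (-(28*Real.sqrt 3/2187)) * h3

theorem stmt_8 :
    ∑' k : ℕ, (-(216/49) : ℝ)^(k+1) / ((((3*(k+1)).choose (k+1) : ℕ)) : ℝ) =
    -(32/81) - (28*Real.sqrt 3/729)*Real.arctan (Real.sqrt 3/5) - (14/81)*Real.log 7 := by
  calc ∑' k : ℕ, (-(216/49) : ℝ)^(k+1) / ((((3*(k+1)).choose (k+1) : ℕ)) : ℝ)
      = ∑' k : ℕ, ∫ t in (0:ℝ)..1, (3*((k:ℝ)+1)+1) * ((-(216/49):ℝ) * (t * (1-t)^2))^(k+1) :=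
        tsum_congr term_eq
    _ = ∫ t in (0:ℝ)..1, gg t := swap
    _ = FF 1 - FF 0 := integ_gg
    _ = -(32/81) - (28*Real.sqrt 3/729)*Real.arctan (Real.sqrt 3/5) - (14/81)*Real.log 7 :=
        FF_eval
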